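/- arXiv:2412.16560 — 2 statements merged into one kernel-verified Lean document; each statement's English description precedes it below -/
import Mathlib

section
/- Let m > 0. A non-empty word u is m-reduced if and only if r(u₁,a) + ℓ(a,u₂) < m for all factorizations u = u₁·a·u₂ with a a letter and u₁, u₂ words. -/
/-- Simon's congruence of order `k`: `u` and `v` have the same subwords
(subsequences) of length at most `k`. -/
def SimonCong {A : Type*} (k : ℕ) (u v : List A) : Prop :=
  ∀ s : List A, s.length ≤ k → (s.Sublist u ↔ s.Sublist v)

/-- The subword distance `δ(u,v) = sup {k | u ∼ₖ v} ∈ ℕ ∪ {∞}`. -/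
noncomputable def delta {A : Type*} (u v : List A) : ℕ∞ :=
  ⨆ k ∈ {k : ℕ | SimonCong k u v}, (k : ℕ∞)

/-- Right side distance `r(u,t) = δ(u, u·t)`. -/
noncomputable def sideR {A : Type*} (u t : List A) : ℕ∞ :=
  delta u (u ++ t)

/-- Left side distance `ℓ(t,u) = δ(t·u, u)`. -/
noncomputable def sideL {A : Type*} (t u : List A) : ℕ∞ :=
  delta (t ++ u) u

/-- The piecewise complexity `h(u)`: the least `n` such that every word
`v` with `u ∼ₙ v` equals `u`. -/
noncomputable def pieceH {A : Type*} (u : List A) : ℕ :=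
  sInf {n : ℕ | ∀ v : List A, SimonCong n u v → v = u}

/-- A word `u` is `m`-reduced if no strict subword of `u` is `∼ₘ`-equivalent to `u`. -/
def MReduced {A : Type*} (m : ℕ) (u : List A) : Prop :=
  ∀ u' : List A, u'.Sublist u → u' ≠ u → ¬ SimonCong m u' u

/-- The piecewise minimality index `ρ(u)`: the least `m` such that `u` is `m`-reduced. -/
noncomputable def rho {A : Type*} (u : List A) : ℕ :=
  sInf {m : ℕ | MReduced m u}


section Stmt2Aux
variable {A : Type*}

lemma simonCong_mono {k j : ℕ} {u v : List A} (h : SimonCong k u v) (hj : j ≤ k) :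
    SimonCong j u v := fun s hs => h s (hs.trans hj)

lemma simonCong_zero (u v : List A) : SimonCong 0 u v := by
  intro s hs
  have : s = [] := List.length_eq_zero_iff.mp (Nat.le_zero.mp hs)
  subst this; simp

lemma notR (u₁ : List A) (a : A) : ¬ SimonCong (u₁.length + 1) u₁ (u₁ ++ [a]) := by
  intro h
  have h1 := (h (u₁ ++ [a]) (by simp)).mpr (List.Sublist.refl _)
  have := h1.length_le
  simp at this

lemma notL (a : A) (u₂ : List A) : ¬ SimonCong (u₂.length + 1) (a :: u₂) u₂ := by
  intro h
  have h1 := (h (a :: u₂) (by simp)).mp (List.Sublist.refl _)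
  have := h1.length_le
  simp at this

/-- The greatest `k` with `u ∼ₖ v` (when it exists). -/
noncomputable def maxCong (u v : List A) : ℕ := sSup {k | SimonCong k u v}

lemma maxCong_spec {u v : List A} (B : ℕ) (hB : ¬ SimonCong (B + 1) u v) :
    SimonCong (maxCong u v) u v ∧ (∀ k, SimonCong k u v ↔ k ≤ maxCong u v) ∧
      delta u v = (maxCong u v : ℕ∞) := by
  set S : Set ℕ := {k | SimonCong k u v} with hS
  have hub : ∀ k ∈ S, k ≤ B := by
    intro k hk
    by_contra hgt
    push_neg at hgt
    exact hB (simonCong_mono hk hgt)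
  have bdd : BddAbove S := ⟨B, hub⟩
  have hne : S.Nonempty := ⟨0, simonCong_zero u v⟩
  have hmem : sSup S ∈ S := Nat.sSup_mem hne bdd
  refine ⟨hmem, ?_, ?_⟩
  · intro k
    constructor
    · intro hk; exact le_csSup bdd hk
    · intro hk; exact simonCong_mono hmem hk
  · apply le_antisymm
    · exact iSup₂_le fun k hk => Nat.cast_le.mpr (le_csSup bdd hk)
    · exact le_iSup₂ (f := fun (k : ℕ) (_ : k ∈ S) => (k : ℕ∞)) (sSup S) hmem

lemma combine {r l : ℕ} {u₁ u₂ : List A} {a : A}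
    (h₁ : SimonCong r u₁ (u₁ ++ [a])) (h₂ : SimonCong l (a :: u₂) u₂) :
    SimonCong (r + l) (u₁ ++ u₂) (u₁ ++ a :: u₂) := by
  intro s hs
  constructor
  · intro h
    exact h.trans ((List.append_sublist_append_left u₁).mpr (List.sublist_cons_self a u₂))
  · intro h
    rw [List.sublist_append_iff] at h
    obtain ⟨p, q, rfl, hp, hq⟩ := h
    rw [List.sublist_cons_iff] at hq
    rcases hq with hq | ⟨q', rfl, hq'⟩
    · exact List.Sublist.append hp hq
    · simp only [List.length_append, List.length_cons] at hs
      rcases Nat.lt_or_ge p.length r with hr | hr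
      · -- p ++ [a] has length ≤ r
        have hpa : (p ++ [a]).Sublist (u₁ ++ [a]) := hp.append (List.Sublist.refl _)
        have hlen : (p ++ [a]).length ≤ r := by simp; omega
        have : (p ++ [a]).Sublist u₁ := (h₁ _ hlen).mpr hpa
        have : (p ++ [a] ++ q').Sublist (u₁ ++ u₂) := this.append hq'
        simpa using this
      · -- a :: q' has length ≤ l
        have haq : (a :: q').Sublist (a :: u₂) := List.cons_sublist_cons.mpr hq'
        have hlen : (a :: q').length ≤ l := by simp; omega
        have : (a :: q').Sublist u₂ := (h₂ _ hlen).mp haq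
        exact hp.append this

lemma key (u₁ u₂ : List A) (a : A) (k : ℕ) :
    SimonCong k (u₁ ++ u₂) (u₁ ++ a :: u₂) ↔
      k ≤ maxCong u₁ (u₁ ++ [a]) + maxCong (a :: u₂) u₂ := by
  obtain ⟨hRmem, hRiff, -⟩ := maxCong_spec u₁.length (notR u₁ a)
  obtain ⟨hLmem, hLiff, -⟩ := maxCong_spec u₂.length (notL a u₂)
  set r := maxCong u₁ (u₁ ++ [a])
  set l := maxCong (a :: u₂) u₂
  constructor
  · intro h
    by_contra hgt
    push_neg at hgt
    -- distinguishers
    have hR' : ¬ SimonCong (r + 1) u₁ (u₁ ++ [a]) := fun hc => by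
      have := (hRiff (r + 1)).mp hc; omega
    have hL' : ¬ SimonCong (l + 1) (a :: u₂) u₂ := fun hc => by
      have := (hLiff (l + 1)).mp hc; omega
    simp only [SimonCong, not_forall] at hR' hL'
    obtain ⟨s₁, hs₁len, hs₁⟩ := hR'
    obtain ⟨s₂, hs₂len, hs₂⟩ := hL'
    -- s₁ : sublist of u₁ ++ [a] but not of u₁
    have hs₁' : s₁.Sublist (u₁ ++ [a]) ∧ ¬ s₁.Sublist u₁ := by
      by_cases h1 : s₁.Sublist u₁
      · exact absurd (iff_of_true h1 (h1.trans (List.sublist_append_left _ _))) hs₁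
      · by_cases h2 : s₁.Sublist (u₁ ++ [a])
        · exact ⟨h2, h1⟩
        · exact absurd (iff_of_false h1 h2) hs₁
    obtain ⟨hs₁sub, hs₁not⟩ := hs₁'
    have hs₂' : s₂.Sublist (a :: u₂) ∧ ¬ s₂.Sublist u₂ := by
      by_cases h1 : s₂.Sublist u₂
      · exact absurd (iff_of_true (h1.trans (List.sublist_cons_self a u₂)) h1) hs₂
      · by_cases h2 : s₂.Sublist (a :: u₂)
        · exact ⟨h2, h1⟩
        · exact absurd (iff_of_false h2 h1) hs₂
    obtain ⟨hs₂sub, hs₂not⟩ := hs₂'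
    -- decompose s₁ = t₁ ++ [a]
    rw [List.sublist_append_iff] at hs₁sub
    obtain ⟨t₁, e, rfl, ht₁, he⟩ := hs₁sub
    have he' : e = [a] := by
      rcases List.sublist_singleton.mp he with h | h
      · subst h; simp at hs₁not; exact absurd ht₁ hs₁not
      · exact h
    subst he'
    -- decompose s₂ = a :: t₂
    rw [List.sublist_cons_iff] at hs₂sub
    rcases hs₂sub with h | ⟨t₂, rfl, ht₂⟩
    · exact hs₂not h
    -- lengths
    have hlt₁ : t₁.length ≤ r := by
      simp only [List.length_append, List.length_singleton] at hs₁len; omega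
    have hlt₂ : t₂.length ≤ l := by
      simp only [List.length_cons] at hs₂len; omega
    -- the witness
    set s := t₁ ++ a :: t₂ with hsdef
    have hslen : s.length ≤ k := by simp [hsdef]; omega
    have hsub2 : s.Sublist (u₁ ++ a :: u₂) :=
      ht₁.append (List.cons_sublist_cons.mpr ht₂)
    have hsub1 : s.Sublist (u₁ ++ u₂) := (h s hslen).mpr hsub2
    rw [List.sublist_append_iff] at hsub1
    obtain ⟨p, q, hpq, hp, hq⟩ := hsub1
    rw [List.append_eq_append_iff] at hpq
    rcases hpq with ⟨c, hc1, hc2⟩ | ⟨c, hc1, hc2⟩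
    · -- p = t₁ ++ c, a :: t₂ = c ++ q
      cases c with
      | nil =>
        simp only [List.nil_append] at hc2
        exact hs₂not (hc2 ▸ hq)
      | cons b c' =>
        rw [List.cons_append] at hc2
        obtain ⟨hb, -⟩ := List.cons.inj hc2
        subst hb
        have : (t₁ ++ [a]).Sublist p := by
          rw [hc1]
          refine (List.append_sublist_append_left t₁).mpr ?_
          exact List.cons_sublist_cons.mpr (List.nil_sublist c')
        exact hs₁not (this.trans hp)
    · -- q = c ++ a :: t₂, so a :: t₂ <+ q <+ u₂
      have : (a :: t₂).Sublist q := by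
        rw [hc2]; exact List.sublist_append_right c _
      exact hs₂not (this.trans hq)
  · intro h
    exact simonCong_mono (combine hRmem hLmem) h

lemma exists_deletion {u' u : List A} (h : u'.Sublist u) (hne : u' ≠ u) :
    ∃ u₁ u₂ a, u = u₁ ++ a :: u₂ ∧ u'.Sublist (u₁ ++ u₂) := by
  induction h with
  | slnil => exact absurd rfl hne
  | cons a h ih => exact ⟨[], _, a, rfl, h⟩
  | @cons_cons l₁ l₂ a h ih =>
    by_cases heq : l₁ = l₂
    · subst heq; exact absurd rfl hne
    · obtain ⟨u₁, u₂, b, rfl, hs⟩ := ih heq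
      exact ⟨a :: u₁, u₂, b, rfl, List.cons_sublist_cons.mpr hs⟩

lemma side_sum_eq (u₁ u₂ : List A) (a : A) :
    sideR u₁ [a] + sideL [a] u₂ =
      ((maxCong u₁ (u₁ ++ [a]) + maxCong (a :: u₂) u₂ : ℕ) : ℕ∞) := by
  obtain ⟨-, -, hR⟩ := maxCong_spec u₁.length (notR u₁ a)
  obtain ⟨-, -, hL⟩ := maxCong_spec u₂.length (notL a u₂)
  have : sideL [a] u₂ = delta (a :: u₂) u₂ := rfl
  rw [sideR, hR, this, hL, Nat.cast_add]

end Stmt2Aux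

theorem stmt2 {A : Type*} [Fintype A] [Nonempty A] (m : ℕ) (hm : 0 < m)
    (u : List A) (hu : u ≠ []) :
    MReduced m u ↔
      ∀ (u₁ u₂ : List A) (a : A), u = u₁ ++ a :: u₂ →
        sideR u₁ [a] + sideL [a] u₂ < (m : ℕ∞) := by
  constructor
  · intro hred u₁ u₂ a hfac
    have hsub : (u₁ ++ u₂).Sublist u := by
      rw [hfac]
      exact (List.append_sublist_append_left u₁).mpr (List.sublist_cons_self a u₂)
    have hne : u₁ ++ u₂ ≠ u := by
      rw [hfac]
      intro h
      have := congrArg List.length h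
      simp at this
    have hnc := hred _ hsub hne
    rw [hfac] at hnc
    rw [key u₁ u₂ a m] at hnc
    rw [side_sum_eq]
    exact_mod_cast Nat.lt_of_not_le hnc
  · intro hcond u' hsub hne hcong
    obtain ⟨u₁, u₂, a, hfac, hsub'⟩ := exists_deletion hsub hne
    have hmidsub : (u₁ ++ u₂).Sublist u := by
      rw [hfac]
      exact (List.append_sublist_append_left u₁).mpr (List.sublist_cons_self a u₂)
    have hmid : SimonCong m (u₁ ++ u₂) u := by
      intro s hs
      constructor
      · intro h; exact h.trans hmidsub
      · intro h
        exact ((hcong s hs).mpr h).trans hsub'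
    rw [hfac] at hmid
    have hkey := (key u₁ u₂ a m).mp hmid
    have := hcond u₁ u₂ a hfac
    rw [side_sum_eq] at this
    have : m ≤ maxCong u₁ (u₁ ++ [a]) + maxCong (a :: u₂) u₂ := hkey
    have hlt : maxCong u₁ (u₁ ++ [a]) + maxCong (a :: u₂) u₂ < m := by
      have h2 := hcond u₁ u₂ a hfac
      rw [side_sum_eq] at h2
      exact_mod_cast h2
    omega
end

section
/- For all words u, v over a nonempty finite alphabet A, h(u·v) ≤ h(u) + h(v) − 1. -/
section Aux

open List

variable {A : Type*}

private lemma pieceH_spec (u : List A) : ∀ z, SimonCong (pieceH u) u z → z = u := by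
  have hne : {n : ℕ | ∀ v : List A, SimonCong n u v → v = u}.Nonempty := by
    refine ⟨u.length + 1, ?_⟩
    intro z hz
    have hu : u <+ z := (hz u (by omega)).mp (List.Sublist.refl u)
    have hlen : z.length ≤ u.length := by
      by_contra hl
      push_neg at hl
      have h1 : z.take (u.length + 1) <+ u :=
        (hz _ (by rw [length_take]; omega)).mpr (take_sublist _ _)
      have h2 := h1.length_le
      rw [length_take] at h2
      omega
    exact (hu.eq_of_length (le_antisymm hu.length_le hlen)).symm
  exact Nat.sInf_mem hne

private lemma pieceH_pos [Nonempty A] (u : List A) : 1 ≤ pieceH u := by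
  by_contra h
  push_neg at h
  have h0 : pieceH u = 0 := by omega
  obtain ⟨a⟩ := ‹Nonempty A›
  have hc : SimonCong (pieceH u) u (u ++ [a]) := by
    rw [h0]
    intro s hs
    have : s = [] := length_eq_zero_iff.mp (Nat.le_zero.mp hs)
    subst this
    simp
  have := pieceH_spec u _ hc
  simp at this

private lemma cons_contra (v : List A) (a : A)
    (h : ∀ t, t <+ v → t.length + 1 ≤ pieceH v → (a :: t) <+ v) : False := by
  have hc : SimonCong (pieceH v) v (a :: v) := by
    intro s hs
    constructor
    · intro h1; exact h1.trans (sublist_cons_self a v)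
    · intro h1
      rcases sublist_cons_iff.mp h1 with h2 | ⟨r, rfl, hr⟩
      · exact h2
      · exact h r hr (by simpa using hs)
  exact List.cons_ne_self a v (pieceH_spec v _ hc)

private lemma max_split {s x : List A} (h : ¬ s <+ x) :
    ∃ s1 a s2, s = s1 ++ a :: s2 ∧ s1 <+ x ∧ ¬ (s1 ++ [a]) <+ x := by
  have hne : {k : ℕ | ¬ s.take k <+ x}.Nonempty := ⟨s.length, by simpa [take_length] using h⟩
  obtain ⟨K, hKmem, hKmin⟩ : ∃ K : ℕ, ¬ s.take K <+ x ∧ ∀ m < K, s.take m <+ x := by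
    refine ⟨sInf {k : ℕ | ¬ s.take k <+ x}, Nat.sInf_mem hne, ?_⟩
    intro m hm
    by_contra hc
    have h2 := Nat.sInf_le (show m ∈ {k : ℕ | ¬ s.take k <+ x} from hc)
    omega
  have hK0 : K ≠ 0 := by
    intro h0
    rw [h0] at hKmem
    exact hKmem (by simp)
  obtain ⟨K', rfl⟩ := Nat.exists_eq_succ_of_ne_zero hK0
  have hK'len : K' < s.length := by
    by_contra hc
    push_neg at hc
    have : s.take K' = s := take_of_length_le hc
    exact h (this ▸ hKmin K' (Nat.lt_succ_self K'))
  have htake : s.take (K' + 1) = s.take K' ++ [s[K']] := by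
    rw [take_succ, getElem?_eq_getElem hK'len]
    rfl
  refine ⟨s.take K', s[K'], s.drop (K' + 1), ?_, hKmin K' (Nat.lt_succ_self K'), ?_⟩
  · conv_lhs => rw [← take_append_drop (K' + 1) s]
    rw [htake, append_assoc, singleton_append]
  · rw [← htake]; exact hKmem

private lemma cons_tail_sublist {s1 r x y : List A} {a : A} (hna : ¬ (s1 ++ [a]) <+ x)
    (h : s1 ++ a :: r <+ x ++ y) : a :: r <+ y := by
  obtain ⟨l1, l2, heq, h1, h2⟩ := sublist_append_iff.mp h
  rcases append_eq_append_iff.mp heq with ⟨m, hl1, hm⟩ | ⟨m, hs1, hl2⟩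
  · cases m with
    | nil => rw [hm]; exact h2
    | cons b m' =>
      have hab : a = b ∧ r = m' ++ l2 := by
        constructor
        · exact (List.cons_eq_cons.mp hm).1
        · exact (List.cons_eq_cons.mp hm).2
      exfalso
      apply hna
      have : s1 ++ [a] <+ l1 := by
        rw [hl1, hab.1]
        exact Sublist.append (Sublist.refl s1) ((singleton_sublist.mpr (by simp)).trans (Sublist.refl _))
      exact this.trans h1
  · have : a :: r <+ l2 := by rw [hl2]; exact sublist_append_right m (a :: r)
    exact this.trans h2

private lemma core (v x s : List A) (hsx : ¬ s <+ x)
    (Hin : ∀ t, t <+ v → t.length + 1 ≤ pieceH v → s ++ t <+ x ++ v) : False := by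
  obtain ⟨s1, a, s2, rfl, hs1, hna⟩ := max_split hsx
  apply cons_contra v a
  intro t ht htl
  have h1 : (s1 ++ a :: s2) ++ t <+ x ++ v := Hin t ht htl
  have h2 : a :: (s2 ++ t) <+ v :=
    cons_tail_sublist hna (by simpa [append_assoc] using h1)
  exact (Sublist.cons₂ a (sublist_append_right s2 t)).trans h2

private lemma tail_of_cons_sublist_cons {a b : A} {t l : List A} (h : a :: t <+ b :: l) :
    t <+ l := by
  cases h with
  | cons _ h' => exact (sublist_cons_self a t).trans h'
  | cons_cons _ h' => exact h'

private lemma prefix_step [Nonempty A] (u v w : List A)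
    (H : SimonCong (pieceH u + pieceH v - 1) (u ++ v) w) :
    ∃ w2, w = u ++ w2 := by
  have hp : 1 ≤ pieceH u := pieceH_pos u
  have hq : 1 ≤ pieceH v := pieceH_pos v
  have hwS : ∀ s, s <+ u → s.length ≤ pieceH u → s <+ w.take w.length := by
    intro s hsu hsl
    rw [take_length]
    exact (H s (by omega)).mp (hsu.trans (sublist_append_left u v))
  have hne : {k : ℕ | ∀ s, s <+ u → s.length ≤ pieceH u → s <+ w.take k}.Nonempty :=
    ⟨w.length, hwS⟩
  set k := sInf {k : ℕ | ∀ s, s <+ u → s.length ≤ pieceH u → s <+ w.take k} with hkdef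
  have hkS : ∀ s, s <+ u → s.length ≤ pieceH u → s <+ w.take k := Nat.sInf_mem hne
  have hklen : k ≤ w.length := Nat.sInf_le hwS
  have A2 : ∀ t, t <+ v → t.length + 1 ≤ pieceH v → t <+ w.drop k := by
    intro t ht htl
    rcases Nat.eq_zero_or_pos k with hk0 | hkpos
    · rw [hk0, drop_zero]
      exact (H t (by omega)).mp (ht.trans (sublist_append_right u v))
    · obtain ⟨k', hkk⟩ : ∃ k', k = k' + 1 := ⟨k - 1, by omega⟩
      have hk' : k' ∉ {k : ℕ | ∀ s, s <+ u → s.length ≤ pieceH u → s <+ w.take k} :=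
        Nat.notMem_of_lt_sInf (by omega)
      simp only [Set.mem_setOf_eq] at hk'
      push_neg at hk'
      obtain ⟨t0, ht0u, ht0l, ht0n⟩ := hk'
      rcases eq_nil_or_concat t0 with rfl | ⟨t0', b, rfl⟩
      · exact absurd (nil_sublist _) ht0n
      · rw [concat_eq_append] at ht0u ht0l ht0n
        have hfull : (t0' ++ [b]) ++ t <+ u ++ v := Sublist.append ht0u ht
        have hlenw : ((t0' ++ [b]) ++ t).length ≤ pieceH u + pieceH v - 1 := by
          simp only [length_append, length_singleton]
          simp only [length_append, length_singleton] at ht0l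
          omega
        have hw : (t0' ++ [b]) ++ t <+ w := (H _ hlenw).mp hfull
        rw [← take_append_drop k' w] at hw
        have hbt : b :: t <+ w.drop k' :=
          cons_tail_sublist ht0n (by simpa [append_assoc] using hw)
        have hk'lt : k' < w.length := by omega
        rw [drop_eq_getElem_cons hk'lt] at hbt
        rw [hkk]
        exact tail_of_cons_sublist_cons hbt
  have A3 : SimonCong (pieceH u) u (w.take k) := by
    intro s hs
    constructor
    · exact fun h1 => hkS s h1 hs
    · intro h1
      by_contra hsu
      refine core v u s hsu ?_
      intro t ht htl
      have hwst : s ++ t <+ w := by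
        have h2 := Sublist.append h1 (A2 t ht htl)
        rwa [take_append_drop] at h2
      refine (H _ ?_).mpr hwst
      simp only [length_append]
      omega
  have hu : w.take k = u := pieceH_spec u _ A3
  exact ⟨w.drop k, by rw [← hu, take_append_drop]⟩

private lemma simonCong_reverse {n : ℕ} {x y : List A} (h : SimonCong n x y) :
    SimonCong n x.reverse y.reverse := by
  intro s hs
  rw [List.sublist_reverse_iff, List.sublist_reverse_iff]
  exact h s.reverse (by simpa using hs)

private lemma pieceH_reverse (x : List A) : pieceH x.reverse = pieceH x := by
  unfold pieceH
  congr 1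
  ext n
  simp only [Set.mem_setOf_eq]
  constructor
  · intro h z hz
    have h2 := simonCong_reverse hz
    have h3 := h _ h2
    simpa using congrArg List.reverse h3
  · intro h z hz
    have h2 := simonCong_reverse hz
    rw [reverse_reverse] at h2
    have h3 := h _ h2
    rw [← h3, reverse_reverse]

end Aux

section MainProof
open List

theorem stmt12 {A : Type*} [Fintype A] [Nonempty A] (u v : List A) :
    pieceH (u ++ v) ≤ pieceH u + pieceH v - 1 := by
  have hp : 1 ≤ pieceH u := pieceH_pos u
  have hq : 1 ≤ pieceH v := pieceH_pos v
  have key : ∀ w, SimonCong (pieceH u + pieceH v - 1) (u ++ v) w → w = u ++ v := by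
    intro w H
    obtain ⟨w2, hw2⟩ := prefix_step u v w H
    have Hrev : SimonCong (pieceH v.reverse + pieceH u.reverse - 1)
        (v.reverse ++ u.reverse) w.reverse := by
      rw [pieceH_reverse, pieceH_reverse]
      intro s hs
      rw [← List.reverse_append, List.sublist_reverse_iff, List.sublist_reverse_iff]
      exact H s.reverse (by simp; omega)
    obtain ⟨w1r, hw1r⟩ := prefix_step v.reverse u.reverse w.reverse Hrev
    have hw1 : w = w1r.reverse ++ v := by
      have h2 := congrArg List.reverse hw1r
      simpa [List.reverse_append] using h2
    set w1 := w1r.reverse with hw1def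
    have hwlen : u.length ≤ w.length := by
      rw [hw2]; simp
    by_cases hlen : u.length ≤ w1.length
    · -- u is a prefix of w1 : w = u ++ z ++ v
      have htu : w.take u.length = u := by rw [hw2, take_left]
      have htw1 : w.take w1.length = w1 := by rw [hw1, take_left]
      have huw1 : w1.take u.length = u := by
        rw [← htw1, take_take, Nat.min_eq_left hlen, htu]
      set z := w1.drop u.length with hzdef
      have hw1z : w1 = u ++ z := by rw [← huw1, hzdef, take_append_drop]
      have hwzv : w = u ++ (z ++ v) := by rw [hw1, hw1z, List.append_assoc]
      have hcong : SimonCong (pieceH u) u (u ++ z) := by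
        intro s hs
        constructor
        · intro h1; exact h1.trans (List.sublist_append_left u z)
        · intro h1
          by_contra hsu
          refine core v u s hsu ?_
          intro t ht htl
          have h2 : s ++ t <+ w := by
            rw [hwzv, ← List.append_assoc]
            exact List.Sublist.append h1 ht
          refine (H _ ?_).mpr h2
          simp only [List.length_append]
          omega
      have hz : z = [] := List.append_right_eq_self.mp (pieceH_spec u _ hcong)
      rw [hwzv, hz, List.nil_append]
    · -- w1 is a proper prefix of u : contradiction
      push_neg at hlen
      have htw1 : w.take w1.length = w1 := by rw [hw1, take_left]
      have hw1u : u.take w1.length = w1 := by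
        have h4 := htw1
        rw [hw2, take_append_of_le_length (le_of_lt hlen)] at h4
        exact h4
      have hw1su : w1 <+ u := hw1u ▸ take_sublist _ _
      have hcong : SimonCong (pieceH u) u w1 := by
        intro s hs
        constructor
        · intro h1
          by_contra hsw1
          refine core v w1 s hsw1 ?_
          intro t ht htl
          have h2 : s ++ t <+ u ++ v := List.Sublist.append h1 ht
          have h3 : s ++ t <+ w := by
            refine (H _ ?_).mp h2
            simp only [List.length_append]
            omega
          rwa [hw1] at h3
        · intro h1; exact h1.trans hw1su
      have heq : w1 = u := pieceH_spec u _ hcong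
      exact absurd (congrArg List.length heq).ge hlen.not_ge
  exact Nat.sInf_le key

end MainProof
end
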